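/- Let 𝒫 = (P_θ)_{θ∈Θ} be a class of probability distributions on a measurable space 𝒳, let μ be a prior probability measure on Θ, and let L : Θ × 𝒜 → [0,1] be a measurable loss function into an action space 𝒜. Define the Bayes risk r_B(𝒫,k,L,μ) = inf_δ ∫_Θ E_{X^k∼P_θ^{⊗k}}[∫_𝒜 L(θ,a) δ(da|X^k)] μ(dθ) and the minimax risk r(𝒫,k,L) = inf_δ sup_{θ∈Θ} E_{X^k∼P_θ^{⊗k}}[∫_𝒜 L(θ,a) δ(da|X^k)], where the infima are over Markov kernels δ from 𝒳^k to 𝒜. Then for all integers n ≥ 1 and m ≥ 0, ε*(𝒫,n,m) ≥ r_B(𝒫,n,L,μ) − r_B(𝒫,n+m,L,μ) and ε*(𝒫,n,m) ≥ r(𝒫,n,L) − r(𝒫,n+m,L). -/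

import Mathlib

open MeasureTheory ProbabilityTheory

/-- Total variation distance between two measures: `sup_A |P(A) - Q(A)|`. -/
noncomputable def tvDist {X : Type*} [MeasurableSpace X] (μ ν : Measure X) : ℝ :=
  ⨆ A : {s : Set X // MeasurableSet s}, |(μ A).toReal - (ν A).toReal|

/-- Minimax sample amplification error `ε*(𝒫, n, m)` for the family `(P θ)_θ`:
the infimum over Markov kernels `T : 𝒳^n → 𝒳^{n+m}` of the worst-case TV distance
between `P^{⊗(n+m)}` and the law of `T` applied to `n` i.i.d. samples from `P`. -/
noncomputable def ampErr {X Θ : Type*} [MeasurableSpace X] (P : Θ → Measure X)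
    (n m : ℕ) : ℝ :=
  ⨅ T : {T : Kernel (Fin n → X) (Fin (n + m) → X) // IsMarkovKernel T},
    ⨆ θ : Θ, tvDist (Measure.pi fun _ : Fin (n + m) => P θ)
      ((Measure.pi fun _ : Fin n => P θ).bind T.1)

/-- Risk of a randomized decision rule `δ` (a Markov kernel from `k` samples to actions)
at parameter `θ`, for the loss `L`. -/
noncomputable def decisionRisk {X Θ 𝒜 : Type*} [MeasurableSpace X] [MeasurableSpace 𝒜]
    (P : Θ → Measure X) (k : ℕ) (L : Θ → 𝒜 → ℝ)
    (δ : Kernel (Fin k → X) 𝒜) (θ : Θ) : ℝ :=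
  ∫ x, ∫ a, L θ a ∂(δ x) ∂(Measure.pi fun _ : Fin k => P θ)

/-- Bayes risk with `k` samples under prior `μ`. -/
noncomputable def bayesRisk {X Θ 𝒜 : Type*} [MeasurableSpace X] [MeasurableSpace Θ]
    [MeasurableSpace 𝒜] (P : Θ → Measure X) (k : ℕ) (L : Θ → 𝒜 → ℝ)
    (μ : Measure Θ) : ℝ :=
  ⨅ δ : {δ : Kernel (Fin k → X) 𝒜 // IsMarkovKernel δ},
    ∫ θ, decisionRisk P k L δ.1 θ ∂μ

/-- Minimax risk with `k` samples. -/
noncomputable def minimaxRisk {X Θ 𝒜 : Type*} [MeasurableSpace X] [MeasurableSpace 𝒜]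
    (P : Θ → Measure X) (k : ℕ) (L : Θ → 𝒜 → ℝ) : ℝ :=
  ⨅ δ : {δ : Kernel (Fin k → X) 𝒜 // IsMarkovKernel δ},
    ⨆ θ : Θ, decisionRisk P k L δ.1 θ

section Aux

variable {Y : Type*} [MeasurableSpace Y]

lemma tvDist_nonneg' (p q : Measure Y) : 0 ≤ tvDist p q :=
  Real.iSup_nonneg fun _ => abs_nonneg _

lemma toReal_prob_le_one (p : Measure Y) [IsProbabilityMeasure p] (s : Set Y) :
    (p s).toReal ≤ 1 := by
  have h : p s ≤ 1 := prob_le_one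
  simpa using ENNReal.toReal_mono ENNReal.one_ne_top h

lemma abs_diff_le_one (p q : Measure Y) [IsProbabilityMeasure p] [IsProbabilityMeasure q]
    (s : Set Y) : |(p s).toReal - (q s).toReal| ≤ 1 := by
  have h1 := toReal_prob_le_one p s
  have h2 := toReal_prob_le_one q s
  have h3 : (0:ℝ) ≤ (p s).toReal := ENNReal.toReal_nonneg
  have h4 : (0:ℝ) ≤ (q s).toReal := ENNReal.toReal_nonneg
  rw [abs_le]; constructor <;> linarith

lemma abs_le_tvDist (p q : Measure Y) [IsProbabilityMeasure p] [IsProbabilityMeasure q]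
    {A : Set Y} (hA : MeasurableSet A) :
    |(p A).toReal - (q A).toReal| ≤ tvDist p q :=
  le_ciSup (f := fun s : {s : Set Y // MeasurableSet s} => |(p s.1).toReal - (q s.1).toReal|)
    ⟨1, by rintro x ⟨s, rfl⟩; exact abs_diff_le_one p q s.1⟩ ⟨A, hA⟩

lemma tvDist_le_one (p q : Measure Y) [IsProbabilityMeasure p] [IsProbabilityMeasure q] :
    tvDist p q ≤ 1 := by
  haveI : Nonempty {s : Set Y // MeasurableSet s} := ⟨⟨∅, MeasurableSet.empty⟩⟩
  exact ciSup_le fun s => abs_diff_le_one p q s.1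

lemma integrable_of_bound (ρ : Measure Y) [IsFiniteMeasure ρ] {f : Y → ℝ}
    (hf : AEStronglyMeasurable f ρ) (h0 : ∀ y, 0 ≤ f y) (h1 : ∀ y, f y ≤ 1) :
    Integrable f ρ :=
  (integrable_const (1:ℝ)).mono' hf (Filter.Eventually.of_forall fun y => by
    rw [Real.norm_eq_abs, abs_of_nonneg (h0 y)]; exact h1 y)

lemma integral_sub_le_tvDist (p q : Measure Y) [IsProbabilityMeasure p] [IsProbabilityMeasure q]
    {f : Y → ℝ} (hf : Measurable f) (h0 : ∀ y, 0 ≤ f y) (h1 : ∀ y, f y ≤ 1) :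
    ∫ y, f y ∂q - ∫ y, f y ∂p ≤ tvDist p q := by
  obtain ⟨s, hs, hle, hge⟩ := MeasureTheory.hahn_decomposition (μ := q) (ν := p)
  have hfq : Integrable f q := integrable_of_bound q hf.aestronglyMeasurable h0 h1
  have hfp : Integrable f p := integrable_of_bound p hf.aestronglyMeasurable h0 h1
  have hgq : Integrable (fun y => 1 - f y) q := (integrable_const 1).sub hfq
  have hgp : Integrable (fun y => 1 - f y) p := (integrable_const 1).sub hfp
  have hq : ∫ y in s, f y ∂q + ∫ y in sᶜ, f y ∂q = ∫ y, f y ∂q := integral_add_compl hs hfq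
  have hp : ∫ y in s, f y ∂p + ∫ y in sᶜ, f y ∂p = ∫ y, f y ∂p := integral_add_compl hs hfp
  have hc : ∫ y in sᶜ, f y ∂q ≤ ∫ y in sᶜ, f y ∂p := by
    refine integral_mono_measure ?_ (Filter.Eventually.of_forall h0) hfp.restrict
    refine Measure.le_iff.mpr fun t ht => ?_
    rw [Measure.restrict_apply ht, Measure.restrict_apply ht]
    exact hge _ (ht.inter hs.compl) Set.inter_subset_right
  have hone : ∫ y in s, (1 - f y) ∂p ≤ ∫ y in s, (1 - f y) ∂q := by
    refine integral_mono_measure ?_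
      (Filter.Eventually.of_forall fun y => sub_nonneg.mpr (h1 y)) hgq.restrict
    refine Measure.le_iff.mpr fun t ht => ?_
    rw [Measure.restrict_apply ht, Measure.restrict_apply ht]
    exact hle _ (ht.inter hs) Set.inter_subset_right
  have hsq : ∫ y in s, f y ∂q + ∫ y in s, (1 - f y) ∂q = (q s).toReal := by
    rw [← integral_add hfq.restrict hgq.restrict]
    simp [Measure.restrict_apply_univ]
    rfl
  have hsp : ∫ y in s, f y ∂p + ∫ y in s, (1 - f y) ∂p = (p s).toReal := by
    rw [← integral_add hfp.restrict hgp.restrict]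
    simp [Measure.restrict_apply_univ]
    rfl
  have habs : (q s).toReal - (p s).toReal ≤ |(p s).toReal - (q s).toReal| := by
    rw [abs_sub_comm]; exact le_abs_self _
  have htv := abs_le_tvDist p q hs
  linarith

end Aux

section Comp
variable {Z W A : Type*} [MeasurableSpace Z] [MeasurableSpace W] [MeasurableSpace A]

lemma measure_bind_isProb (ν : Measure Z) [IsProbabilityMeasure ν] (T : Kernel Z W)
    [IsMarkovKernel T] : IsProbabilityMeasure (ν.bind ⇑T) := by
  constructor
  rw [Measure.bind_apply MeasurableSet.univ T.measurable.aemeasurable]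
  simp

lemma integral_comp_kernel (ν : Measure Z) [IsProbabilityMeasure ν] (T : Kernel Z W)
    [IsMarkovKernel T] (δ : Kernel W A) [IsMarkovKernel δ] {ℓ : A → ℝ} (hℓ : Measurable ℓ)
    (h0 : ∀ a, 0 ≤ ℓ a) (h1 : ∀ a, ℓ a ≤ 1) :
    ∫ z, ∫ a, ℓ a ∂((δ ∘ₖ T) z) ∂ν = ∫ w, ∫ a, ℓ a ∂(δ w) ∂(ν.bind ⇑T) := by
  have hmeasℓ : Measurable fun a => ENNReal.ofReal (ℓ a) := ENNReal.measurable_ofReal.comp hℓ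
  have hGmeas : Measurable fun w => ∫⁻ a, ENNReal.ofReal (ℓ a) ∂(δ w) := by
    have h : Measurable fun p : W × A => ENNReal.ofReal (ℓ p.2) := hmeasℓ.comp measurable_snd
    exact h.lintegral_kernel_prod_right' (κ := δ)
  have hGle : ∀ w, ∫⁻ a, ENNReal.ofReal (ℓ a) ∂(δ w) ≤ 1 := fun w => by
    calc ∫⁻ a, ENNReal.ofReal (ℓ a) ∂(δ w) ≤ ∫⁻ _, 1 ∂(δ w) :=
          lintegral_mono fun a => ENNReal.ofReal_le_one.mpr (h1 a)
    _ = 1 := by simp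
  have key : ∀ ρ : Measure A, ∫ a, ℓ a ∂ρ = (∫⁻ a, ENNReal.ofReal (ℓ a) ∂ρ).toReal := fun ρ =>
    integral_eq_lintegral_of_nonneg_ae (Filter.Eventually.of_forall h0) hℓ.aestronglyMeasurable
  have hinner : ∀ z, ∫ a, ℓ a ∂((δ ∘ₖ T) z)
      = (∫⁻ w, ∫⁻ a, ENNReal.ofReal (ℓ a) ∂(δ w) ∂(T z)).toReal := by
    intro z
    rw [Kernel.comp_apply, key, Measure.lintegral_bind δ.measurable.aemeasurable hmeasℓ.aemeasurable]
  have hTz : ∀ z, (∫⁻ w, ∫⁻ a, ENNReal.ofReal (ℓ a) ∂(δ w) ∂(T z)) ≤ 1 := fun z => by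
    calc (∫⁻ w, ∫⁻ a, ENNReal.ofReal (ℓ a) ∂(δ w) ∂(T z)) ≤ ∫⁻ _, 1 ∂(T z) :=
          lintegral_mono hGle
    _ = 1 := by simp
  calc ∫ z, ∫ a, ℓ a ∂((δ ∘ₖ T) z) ∂ν
      = ∫ z, (∫⁻ w, ∫⁻ a, ENNReal.ofReal (ℓ a) ∂(δ w) ∂(T z)).toReal ∂ν := by
        simp_rw [hinner]
    _ = (∫⁻ z, ∫⁻ w, ∫⁻ a, ENNReal.ofReal (ℓ a) ∂(δ w) ∂(T z) ∂ν).toReal := by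
        refine integral_toReal ?_
          (Filter.Eventually.of_forall fun z => lt_of_le_of_lt (hTz z) ENNReal.one_lt_top)
        exact ((hGmeas.comp measurable_snd).lintegral_kernel_prod_right' (κ := T)).aemeasurable
    _ = (∫⁻ w, ∫⁻ a, ENNReal.ofReal (ℓ a) ∂(δ w) ∂(ν.bind ⇑T)).toReal := by
        rw [Measure.lintegral_bind T.measurable.aemeasurable hGmeas.aemeasurable]
    _ = ∫ w, (∫⁻ a, ENNReal.ofReal (ℓ a) ∂(δ w)).toReal ∂(ν.bind ⇑T) :=
        (integral_toReal hGmeas.aemeasurable (Filter.Eventually.of_forall fun w =>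
          lt_of_le_of_lt (hGle w) ENNReal.one_lt_top)).symm
    _ = ∫ w, ∫ a, ℓ a ∂(δ w) ∂(ν.bind ⇑T) := by
        simp_rw [key]

end Comp

section PiMeas
variable {X Θ : Type*} [MeasurableSpace X] [MeasurableSpace Θ]

lemma measurable_pi_measure (P : Θ → Measure X) (hP : ∀ θ, IsProbabilityMeasure (P θ))
    (hPmeas : Measurable P) (k : ℕ) :
    Measurable fun θ => Measure.pi fun _ : Fin k => P θ := by
  refine Measure.measurable_of_measurable_coe _ fun s hs => ?_
  refine MeasurableSpace.induction_on_inter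
    (C := fun s _ => Measurable fun θ => (Measure.pi fun _ : Fin k => P θ) s)
    (generateFrom_pi (α := fun _ : Fin k => X)).symm isPiSystem_pi ?_ ?_ ?_ ?_ _ hs
  · simp
  · rintro _ ⟨t, ht, rfl⟩
    have heq : (fun θ => (Measure.pi fun _ : Fin k => P θ) (Set.pi Set.univ t))
        = fun θ => ∏ i : Fin k, P θ (t i) := by
      funext θ
      haveI := hP θ
      exact Measure.pi_pi _ _
    rw [heq]
    exact Finset.measurable_prod Finset.univ fun i _ =>
      (Measure.measurable_coe (ht i (Set.mem_univ i))).comp hPmeas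
  · intro t ht hC
    have heq : (fun θ => (Measure.pi fun _ : Fin k => P θ) tᶜ)
        = fun θ => 1 - (Measure.pi fun _ : Fin k => P θ) t := by
      funext θ
      haveI := hP θ
      haveI : IsProbabilityMeasure (Measure.pi fun _ : Fin k => P θ) := by infer_instance
      rw [measure_compl ht (measure_ne_top _ _), measure_univ]
    rw [heq]
    exact measurable_const.sub hC
  · intro f hd hm hC
    have heq : (fun θ => (Measure.pi fun _ : Fin k => P θ) (⋃ i, f i))
        = fun θ => ∑' i, (Measure.pi fun _ : Fin k => P θ) (f i) := by
      funext θ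
      exact measure_iUnion hd hm
    rw [heq]
    exact Measurable.ennreal_tsum hC

noncomputable def piKernel (P : Θ → Measure X) (hP : ∀ θ, IsProbabilityMeasure (P θ))
    (hPmeas : Measurable P) (k : ℕ) : Kernel Θ (Fin k → X) :=
  ⟨fun θ => Measure.pi fun _ : Fin k => P θ, measurable_pi_measure P hP hPmeas k⟩

lemma piKernel_apply (P : Θ → Measure X) (hP : ∀ θ, IsProbabilityMeasure (P θ))
    (hPmeas : Measurable P) (k : ℕ) (θ : Θ) :
    piKernel P hP hPmeas k θ = Measure.pi fun _ : Fin k => P θ := rfl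

lemma piKernel_isMarkov (P : Θ → Measure X) (hP : ∀ θ, IsProbabilityMeasure (P θ))
    (hPmeas : Measurable P) (k : ℕ) : IsMarkovKernel (piKernel P hP hPmeas k) := by
  constructor
  intro θ
  rw [piKernel_apply]
  haveI := hP θ
  infer_instance

end PiMeas

section Risk

variable {X Θ 𝒜 : Type*} [MeasurableSpace X] [MeasurableSpace Θ] [MeasurableSpace 𝒜]

lemma inner_risk_nonneg (L : Θ → 𝒜 → ℝ) (hL0 : ∀ θ a, 0 ≤ L θ a) (θ : Θ) (ρ : Measure 𝒜) :
    0 ≤ ∫ a, L θ a ∂ρ := integral_nonneg fun a => hL0 θ a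

lemma inner_risk_le_one (L : Θ → 𝒜 → ℝ) (hL0 : ∀ θ a, 0 ≤ L θ a) (hL1 : ∀ θ a, L θ a ≤ 1)
    (θ : Θ) (ρ : Measure 𝒜) [IsProbabilityMeasure ρ] :
    ∫ a, L θ a ∂ρ ≤ 1 := by
  have h := norm_integral_le_of_norm_le_const (μ := ρ) (C := 1)
    (Filter.Eventually.of_forall fun a => by
      rw [Real.norm_eq_abs, abs_of_nonneg (hL0 θ a)]; exact hL1 θ a)
  simp only [probReal_univ, mul_one] at h
  exact le_trans (le_abs_self _) h

lemma decisionRisk_nonneg (P : Θ → Measure X) (k : ℕ) (L : Θ → 𝒜 → ℝ)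
    (hL0 : ∀ θ a, 0 ≤ L θ a) (δ : Kernel (Fin k → X) 𝒜) (θ : Θ) :
    0 ≤ decisionRisk P k L δ θ :=
  integral_nonneg fun _ => integral_nonneg fun a => hL0 θ a

lemma decisionRisk_le_one (P : Θ → Measure X) (hP : ∀ θ, IsProbabilityMeasure (P θ))
    (k : ℕ) (L : Θ → 𝒜 → ℝ) (hL0 : ∀ θ a, 0 ≤ L θ a) (hL1 : ∀ θ a, L θ a ≤ 1)
    (δ : Kernel (Fin k → X) 𝒜) [IsMarkovKernel δ] (θ : Θ) :
    decisionRisk P k L δ θ ≤ 1 := by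
  haveI := hP θ
  have h := norm_integral_le_of_norm_le_const
    (μ := Measure.pi fun _ : Fin k => P θ) (C := 1)
    (f := fun x => ∫ a, L θ a ∂(δ x))
    (Filter.Eventually.of_forall fun x => by
      rw [Real.norm_eq_abs, abs_of_nonneg (inner_risk_nonneg L hL0 θ (δ x))]
      exact inner_risk_le_one L hL0 hL1 θ (δ x))
  simp only [probReal_univ, mul_one] at h
  exact le_trans (le_abs_self _) h

lemma stronglyMeasurable_decisionRisk (P : Θ → Measure X)
    (hP : ∀ θ, IsProbabilityMeasure (P θ)) (hPmeas : Measurable P) (k : ℕ)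
    (L : Θ → 𝒜 → ℝ) (hL : Measurable (Function.uncurry L))
    (δ : Kernel (Fin k → X) 𝒜) [IsMarkovKernel δ] :
    StronglyMeasurable fun θ => decisionRisk P k L δ θ := by
  haveI := piKernel_isMarkov P hP hPmeas k
  have h1 : StronglyMeasurable fun p : Θ × (Fin k → X) => ∫ a, L p.1 a ∂(δ p.2) := by
    have hf : StronglyMeasurable fun q : (Θ × (Fin k → X)) × 𝒜 => L q.1.1 q.2 :=
      (hL.comp ((measurable_fst.comp measurable_fst).prodMk measurable_snd)).stronglyMeasurable
    have h := hf.integral_kernel_prod_right' (κ := δ.comap Prod.snd measurable_snd)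
    simpa only [Kernel.comap_apply] using h
  have h2 := h1.integral_kernel_prod_right' (κ := piKernel P hP hPmeas k)
  simpa only [piKernel_apply, decisionRisk] using h2

lemma risk_comp_le (P : Θ → Measure X) (hP : ∀ θ, IsProbabilityMeasure (P θ))
    (L : Θ → 𝒜 → ℝ) (hL : Measurable (Function.uncurry L))
    (hL0 : ∀ θ a, 0 ≤ L θ a) (hL1 : ∀ θ a, L θ a ≤ 1) (n m : ℕ)
    (T : Kernel (Fin n → X) (Fin (n + m) → X)) [IsMarkovKernel T]
    (δ : Kernel (Fin (n + m) → X) 𝒜) [IsMarkovKernel δ] (θ : Θ) :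
    decisionRisk P n L (δ ∘ₖ T) θ ≤ decisionRisk P (n + m) L δ θ
      + tvDist (Measure.pi fun _ : Fin (n + m) => P θ)
          ((Measure.pi fun _ : Fin n => P θ).bind ⇑T) := by
  haveI := hP θ
  haveI : IsProbabilityMeasure ((Measure.pi fun _ : Fin n => P θ).bind ⇑T) :=
    measure_bind_isProb _ T
  have hLθ : Measurable (L θ) := hL.comp measurable_prodMk_left
  have hgmeas : Measurable fun w : Fin (n + m) → X => ∫ a, L θ a ∂(δ w) := by
    have hf : StronglyMeasurable fun q : (Fin (n + m) → X) × 𝒜 => L θ q.2 :=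
      (hLθ.comp measurable_snd).stronglyMeasurable
    exact (hf.integral_kernel_prod_right' (κ := δ)).measurable
  have hcomp : decisionRisk P n L (δ ∘ₖ T) θ
      = ∫ w, ∫ a, L θ a ∂(δ w) ∂((Measure.pi fun _ : Fin n => P θ).bind ⇑T) :=
    integral_comp_kernel (Measure.pi fun _ : Fin n => P θ) T δ hLθ (hL0 θ) (hL1 θ)
  have hA := integral_sub_le_tvDist (Measure.pi fun _ : Fin (n + m) => P θ)
    ((Measure.pi fun _ : Fin n => P θ).bind ⇑T) hgmeas
    (fun w => inner_risk_nonneg L hL0 θ (δ w))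
    (fun w => inner_risk_le_one L hL0 hL1 θ (δ w))
  have hR : decisionRisk P (n + m) L δ θ
      = ∫ w, ∫ a, L θ a ∂(δ w) ∂(Measure.pi fun _ : Fin (n + m) => P θ) := rfl
  linarith

end Risk

/-- Lemma: general lower bound for sample amplification.
For any class of probability distributions `(P θ)_{θ∈Θ}`, any prior `μ`, and any
measurable loss `L : Θ × 𝒜 → [0,1]`, the minimax sample-amplification error dominates
the difference of Bayes risks, and also the difference of minimax risks, between
sample sizes `n` and `n+m`. -/
theorem sample_amplification_general_lower_bound
    {X Θ 𝒜 : Type*} [MeasurableSpace X] [MeasurableSpace Θ] [MeasurableSpace 𝒜]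
    (P : Θ → Measure X) (hP : ∀ θ, IsProbabilityMeasure (P θ)) (hPmeas : Measurable P)
    (μ : Measure Θ) (hμ : IsProbabilityMeasure μ)
    (L : Θ → 𝒜 → ℝ) (hL : Measurable (Function.uncurry L))
    (hL0 : ∀ θ a, 0 ≤ L θ a) (hL1 : ∀ θ a, L θ a ≤ 1)
    (n m : ℕ) (hn : 1 ≤ n) :
    bayesRisk P n L μ - bayesRisk P (n + m) L μ ≤ ampErr P n m ∧
    minimaxRisk P n L - minimaxRisk P (n + m) L ≤ ampErr P n m := by
  classical
  have hΘ : Nonempty Θ := by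
    by_contra h
    rw [not_nonempty_iff] at h
    have h1 := hμ.measure_univ
    rw [Set.univ_eq_empty_iff.mpr h] at h1
    simp at h1
  obtain ⟨θ₀⟩ := hΘ
  have hampnn : 0 ≤ ampErr P n m :=
    Real.iInf_nonneg fun T => Real.iSup_nonneg fun θ => tvDist_nonneg' _ _
  by_cases hA : Nonempty 𝒜
  case neg =>
    -- no actions: both risks are infima over the empty type, hence `0`
    haveI : IsEmpty 𝒜 := not_nonempty_iff.mp hA
    have hX : Nonempty X := by
      by_contra hX
      rw [not_nonempty_iff] at hX
      have h1 := (hP θ₀).measure_univ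
      rw [Set.univ_eq_empty_iff.mpr hX] at h1
      simp at h1
    have hempty : ∀ k : ℕ, IsEmpty {δ : Kernel (Fin k → X) 𝒜 // IsMarkovKernel δ} := by
      intro k
      constructor
      rintro ⟨δ, hδ⟩
      have x : Fin k → X := fun _ => Classical.arbitrary X
      have h1 := (hδ.isProbabilityMeasure x).measure_univ
      rw [Set.univ_eq_empty_iff.mpr (by infer_instance)] at h1
      simp at h1
    haveI := hempty n
    haveI := hempty (n + m)
    have e1 : bayesRisk P n L μ = 0 := Real.iInf_of_isEmpty _
    have e2 : bayesRisk P (n + m) L μ = 0 := Real.iInf_of_isEmpty _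
    have e3 : minimaxRisk P n L = 0 := Real.iInf_of_isEmpty _
    have e4 : minimaxRisk P (n + m) L = 0 := Real.iInf_of_isEmpty _
    constructor
    · rw [e1, e2]; simpa using hampnn
    · rw [e3, e4]; simpa using hampnn
  case pos =>
  obtain ⟨a₀⟩ := hA
  haveI hne : ∀ k : ℕ, Nonempty {δ : Kernel (Fin k → X) 𝒜 // IsMarkovKernel δ} := fun k =>
    ⟨⟨Kernel.const _ (Measure.dirac a₀), by infer_instance⟩⟩
  haveI := hne n
  haveI := hne (n + m)
  haveI : Nonempty {T : Kernel (Fin n → X) (Fin (n + m) → X) // IsMarkovKernel T} := by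
    haveI := hP θ₀
    exact ⟨⟨Kernel.const _ (Measure.pi fun _ : Fin (n + m) => P θ₀), by infer_instance⟩⟩
  -- the key ε-approximation argument
  have key : ∀ ε : ℝ, 0 < ε →
      bayesRisk P n L μ ≤ ampErr P n m + bayesRisk P (n + m) L μ + ε ∧
      minimaxRisk P n L ≤ ampErr P n m + minimaxRisk P (n + m) L + ε := by
    intro ε hε
    -- choose a near-optimal amplification kernel T
    obtain ⟨T, hT⟩ := exists_lt_of_ciInf_lt (a := ampErr P n m + ε / 2)
      (f := fun T : {T : Kernel (Fin n → X) (Fin (n + m) → X) // IsMarkovKernel T} =>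
        ⨆ θ : Θ, tvDist (Measure.pi fun _ : Fin (n + m) => P θ)
          ((Measure.pi fun _ : Fin n => P θ).bind T.1))
      (by show ampErr P n m < _; linarith)
    haveI := T.2
    set S := ⨆ θ : Θ, tvDist (Measure.pi fun _ : Fin (n + m) => P θ)
      ((Measure.pi fun _ : Fin n => P θ).bind T.1) with hSdef
    have hSbdd : BddAbove (Set.range fun θ : Θ =>
        tvDist (Measure.pi fun _ : Fin (n + m) => P θ)
          ((Measure.pi fun _ : Fin n => P θ).bind T.1)) := by
      refine ⟨1, ?_⟩
      rintro x ⟨θ, rfl⟩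
      haveI := hP θ
      haveI : IsProbabilityMeasure ((Measure.pi fun _ : Fin n => P θ).bind T.1) :=
        measure_bind_isProb _ T.1
      exact tvDist_le_one _ _
    have hSle : ∀ θ : Θ, tvDist (Measure.pi fun _ : Fin (n + m) => P θ)
        ((Measure.pi fun _ : Fin n => P θ).bind T.1) ≤ S := fun θ => le_ciSup hSbdd θ
    constructor
    · -- Bayes part
      obtain ⟨δ, hδ⟩ := exists_lt_of_ciInf_lt (a := bayesRisk P (n + m) L μ + ε / 2)
        (f := fun δ : {δ : Kernel (Fin (n + m) → X) 𝒜 // IsMarkovKernel δ} =>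
          ∫ θ, decisionRisk P (n + m) L δ.1 θ ∂μ)
        (by show bayesRisk P (n + m) L μ < _; linarith)
      haveI := δ.2
      have hpt : ∀ θ, decisionRisk P n L (δ.1 ∘ₖ T.1) θ
          ≤ decisionRisk P (n + m) L δ.1 θ + S := fun θ => by
        have h1 := risk_comp_le P hP L hL hL0 hL1 n m T.1 δ.1 θ
        have h2 := hSle θ
        linarith
      have hint : Integrable (fun θ => decisionRisk P (n + m) L δ.1 θ) μ :=
        integrable_of_bound μ
          (stronglyMeasurable_decisionRisk P hP hPmeas (n + m) L hL δ.1).aestronglyMeasurable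
          (fun θ => decisionRisk_nonneg P (n + m) L hL0 δ.1 θ)
          (fun θ => decisionRisk_le_one P hP (n + m) L hL0 hL1 δ.1 θ)
      have h2 : bayesRisk P n L μ ≤ ∫ θ, decisionRisk P n L (δ.1 ∘ₖ T.1) θ ∂μ := by
        refine ciInf_le ⟨0, ?_⟩ (⟨δ.1 ∘ₖ T.1, by infer_instance⟩ :
          {δ' : Kernel (Fin n → X) 𝒜 // IsMarkovKernel δ'})
        rintro x ⟨δ', rfl⟩
        exact integral_nonneg fun θ => decisionRisk_nonneg P n L hL0 δ'.1 θ
      have h3 : ∫ θ, decisionRisk P n L (δ.1 ∘ₖ T.1) θ ∂μ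
          ≤ ∫ θ, (decisionRisk P (n + m) L δ.1 θ + S) ∂μ := by
        refine integral_mono_of_nonneg
          (Filter.Eventually.of_forall fun θ => decisionRisk_nonneg P n L hL0 _ θ)
          (hint.add (integrable_const S)) (Filter.Eventually.of_forall hpt)
      have h4 : ∫ θ, (decisionRisk P (n + m) L δ.1 θ + S) ∂μ
          = ∫ θ, decisionRisk P (n + m) L δ.1 θ ∂μ + S := by
        rw [integral_add hint (integrable_const S), integral_const]
        simp
      have h5 : S < ampErr P n m + ε / 2 := hT
      have h6 : ∫ θ, decisionRisk P (n + m) L δ.1 θ ∂μ < bayesRisk P (n + m) L μ + ε / 2 := hδ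
      linarith
    · -- minimax part
      obtain ⟨δ, hδ⟩ := exists_lt_of_ciInf_lt (a := minimaxRisk P (n + m) L + ε / 2)
        (f := fun δ : {δ : Kernel (Fin (n + m) → X) 𝒜 // IsMarkovKernel δ} =>
          ⨆ θ : Θ, decisionRisk P (n + m) L δ.1 θ)
        (by show minimaxRisk P (n + m) L < _; linarith)
      haveI := δ.2
      have hpt : ∀ θ, decisionRisk P n L (δ.1 ∘ₖ T.1) θ
          ≤ decisionRisk P (n + m) L δ.1 θ + S := fun θ => by
        have h1 := risk_comp_le P hP L hL hL0 hL1 n m T.1 δ.1 θ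
        have h2 := hSle θ
        linarith
      have hbdd : BddAbove (Set.range fun θ : Θ => decisionRisk P (n + m) L δ.1 θ) := by
        refine ⟨1, ?_⟩
        rintro x ⟨θ, rfl⟩
        exact decisionRisk_le_one P hP (n + m) L hL0 hL1 δ.1 θ
      have h2 : minimaxRisk P n L ≤ ⨆ θ : Θ, decisionRisk P n L (δ.1 ∘ₖ T.1) θ := by
        refine ciInf_le ⟨0, ?_⟩ (⟨δ.1 ∘ₖ T.1, by infer_instance⟩ :
          {δ' : Kernel (Fin n → X) 𝒜 // IsMarkovKernel δ'})
        rintro x ⟨δ', rfl⟩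
        exact Real.iSup_nonneg fun θ => decisionRisk_nonneg P n L hL0 δ'.1 θ
      haveI : Nonempty Θ := ⟨θ₀⟩
      have h3 : (⨆ θ : Θ, decisionRisk P n L (δ.1 ∘ₖ T.1) θ)
          ≤ (⨆ θ : Θ, decisionRisk P (n + m) L δ.1 θ) + S := by
        refine ciSup_le fun θ => ?_
        have := le_ciSup hbdd θ
        have := hpt θ
        linarith
      have h5 : S < ampErr P n m + ε / 2 := hT
      have h6 : (⨆ θ : Θ, decisionRisk P (n + m) L δ.1 θ)
          < minimaxRisk P (n + m) L + ε / 2 := hδ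
      linarith
  constructor
  · rw [sub_le_iff_le_add]
    by_contra hcon
    push_neg at hcon
    have h := (key ((bayesRisk P n L μ - (ampErr P n m + bayesRisk P (n + m) L μ)) / 2)
      (by linarith)).1
    linarith
  · rw [sub_le_iff_le_add]
    by_contra hcon
    push_neg at hcon
    have h := (key ((minimaxRisk P n L - (ampErr P n m + minimaxRisk P (n + m) L)) / 2)
      (by linarith)).2
    linarith
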